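/- Let X be a uniquely divisible, connected, locally convex, Hausdorff topological additive commutative group and let a, b ∈ X. There is a unique function F : ℚ → X such that for every rational q = m/l with m ∈ ℤ and l a positive integer, l•F(q) = m•a + (l−m)•b (integer multiples taken in the group X), and this function F is continuous on ℚ (with the topology induced from ℝ). -/

import Mathlib

/-- A subset `A` of an additive commutative monoid is convex if whenever
`m • x = m₁ • x₁ + ⋯ + mₙ • xₙ` with `xᵢ ∈ A`, positive integers `mᵢ`
and `m = m₁ + ⋯ + mₙ`, then `x ∈ A`. -/
def MConvex {X : Type*} [AddCommMonoid X] (A : Set X) : Prop :=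
  ∀ (n : ℕ), 0 < n → ∀ (x : X) (xs : Fin n → X) (ms : Fin n → ℕ),
    (∀ i, xs i ∈ A) → (∀ i, 0 < ms i) →
    (∑ i, ms i) • x = ∑ i, ms i • xs i → x ∈ A

/-- A topological additive commutative monoid is locally convex if its topology has a basis
consisting of convex sets. -/
def LocallyMConvex (X : Type*) [AddCommMonoid X] [TopologicalSpace X] : Prop :=
  ∃ B : Set (Set X), TopologicalSpace.IsTopologicalBasis B ∧ ∀ U ∈ B, MConvex U

private lemma mconvex_key {X : Type*} [AddCommGroup X] {W : Set X} (hW : MConvex W)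
    (h0 : (0:X) ∈ W)
    (L : List X) (hL : ∀ w ∈ L, w ∈ W) {x : X} {m l : ℕ} (hm : 0 < m)
    (hlt : m * L.length < l) (hx : l • x = m • L.sum) : x ∈ W := by
  refine hW (L.length + 1) (Nat.succ_pos _) x
    (Fin.cons 0 (fun i => L.get i))
    (Fin.cons (l - m * L.length) (fun _ => m)) ?_ ?_ ?_
  · intro i
    refine Fin.cases ?_ ?_ i
    · exact h0
    · intro j; exact hL _ (by simpa using L.get_mem j j.isLt)
  · intro i
    refine Fin.cases ?_ ?_ i
    · simpa using Nat.sub_pos_of_lt hlt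
    · intro j; exact hm
  · rw [Fin.sum_univ_succ, Fin.sum_univ_succ]
    simp only [Fin.cons_zero, Fin.cons_succ]
    have h1 : (l - m * L.length) + ∑ _i : Fin L.length, m = l := by
      simp only [Finset.sum_const, Finset.card_univ, Fintype.card_fin, smul_eq_mul]
      rw [mul_comm L.length m]; omega
    have h2 : ∑ i : Fin L.length, m • L.get i = m • L.sum := by
      rw [← Finset.smul_sum]
      congr 1
      simp [List.get_eq_getElem]
    rw [h1, h2, smul_zero, zero_add]
    exact hx

private lemma cross_mul (q : ℚ) (m : ℤ) (l : ℕ) (hl : 0 < l) (hq : q = (m : ℚ) / (l : ℚ)) :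
    q.num * l = m * q.den := by
  have hd : (q.den : ℚ) ≠ 0 := by exact_mod_cast q.den_nz
  have hl' : (l : ℚ) ≠ 0 := by positivity
  have : (q.num : ℚ) * l = m * q.den := by
    rw [← Rat.num_div_den q] at hq
    field_simp at hq
    rw [mul_comm (m : ℚ)]
    exact_mod_cast hq
  exact_mod_cast this

theorem segment_map_exists_unique_and_continuous
    {X : Type*} [AddCommGroup X] [TopologicalSpace X] [IsTopologicalAddGroup X]
    [ConnectedSpace X] [T2Space X]
    (hud : ∀ n : ℕ, 0 < n → Function.Bijective (fun x : X => n • x))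
    (hlc : LocallyMConvex X) (a b : X) :
    (∃! F : ℚ → X, ∀ (q : ℚ) (m : ℤ) (l : ℕ), 0 < l → q = (m : ℚ) / (l : ℚ) →
        (l : ℤ) • F q = m • a + ((l : ℤ) - m) • b) ∧
      ∀ F : ℚ → X, (∀ (q : ℚ) (m : ℤ) (l : ℕ), 0 < l → q = (m : ℚ) / (l : ℚ) →
        (l : ℤ) • F q = m • a + ((l : ℤ) - m) • b) → Continuous F := by
  have injz : ∀ (n : ℕ), 0 < n → ∀ x y : X, (n : ℤ) • x = (n : ℤ) • y → x = y := by
    intro n hn x y h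
    exact (hud n hn).1 (by simpa [natCast_zsmul] using h)
  constructor
  · -- existence and uniqueness
    set F : ℚ → X := fun q => Function.surjInv (hud q.den q.pos).2
      (q.num • a + ((q.den : ℤ) - q.num) • b) with hFdef
    have hden : ∀ q : ℚ, (q.den : ℤ) • F q = q.num • a + ((q.den : ℤ) - q.num) • b := by
      intro q
      have := Function.surjInv_eq (hud q.den q.pos).2
        (q.num • a + ((q.den : ℤ) - q.num) • b)
      simpa [hFdef, natCast_zsmul] using this
    have hFspec : ∀ (q : ℚ) (m : ℤ) (l : ℕ), 0 < l → q = (m : ℚ) / (l : ℚ) →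
        (l : ℤ) • F q = m • a + ((l : ℤ) - m) • b := by
      intro q m l hl hq
      apply injz q.den q.pos
      have hc := cross_mul q m l hl hq
      rw [smul_comm, hden q, smul_add, smul_add, smul_smul, smul_smul, smul_smul, smul_smul]
      rw [show (l : ℤ) * q.num = (q.den : ℤ) * m from by linear_combination hc,
          show (l : ℤ) * ((q.den : ℤ) - q.num) = (q.den : ℤ) * ((l : ℤ) - m) from by
            linear_combination -hc]
    refine ⟨F, hFspec, ?_⟩
    intro G hG
    funext q
    apply injz q.den q.pos
    rw [hG q q.num q.den q.pos (Rat.num_div_den q).symm, hden q]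
  · -- continuity
    intro F hF
    have hdiff : ∀ q q₀ : ℚ,
        ((q.den * q₀.den : ℕ) : ℤ) • (F q - F q₀)
          = (q.num * q₀.den - q₀.num * q.den) • (a - b) := by
      intro q q₀
      have hd : (q.den : ℚ) ≠ 0 := by exact_mod_cast q.den_nz
      have hd₀ : (q₀.den : ℚ) ≠ 0 := by exact_mod_cast q₀.den_nz
      have hpos : 0 < q.den * q₀.den := Nat.mul_pos q.pos q₀.pos
      have h1 := hF q (q.num * q₀.den) (q.den * q₀.den) hpos (by
        push_cast
        rw [mul_div_mul_right _ _ hd₀]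
        exact (Rat.num_div_den q).symm)
      have h2 := hF q₀ (q₀.num * q.den) (q.den * q₀.den) hpos (by
        push_cast
        rw [mul_comm (q.den : ℚ) (q₀.den : ℚ), mul_div_mul_right _ _ hd]
        exact (Rat.num_div_den q₀).symm)
      rw [smul_sub, h1, h2]
      push_cast
      module
    obtain ⟨B, hB, hBc⟩ := hlc
    rw [continuous_iff_continuousAt]
    intro q₀
    rw [ContinuousAt, (hB.nhds_hasBasis).tendsto_right_iff]
    rintro V ⟨hVB, hVq⟩
    set W : Set X := {x | F q₀ + x ∈ V ∧ F q₀ - x ∈ V} with hWdef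
    have hWconv : MConvex W := by
      intro n hn x xs ms hxs hms hsum
      constructor
      · refine hBc V hVB n hn (F q₀ + x) (fun i => F q₀ + xs i) ms (fun i => (hxs i).1) hms ?_
        simp only [smul_add, hsum, Finset.sum_add_distrib, Finset.sum_smul]
      · refine hBc V hVB n hn (F q₀ - x) (fun i => F q₀ - xs i) ms (fun i => (hxs i).2) hms ?_
        simp only [smul_sub, hsum, Finset.sum_sub_distrib, Finset.sum_smul]
    have hW0 : (0 : X) ∈ W := by
      constructor <;> simpa using hVq
    have hWsymm : ∀ x : X, x ∈ W → -x ∈ W := by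
      rintro x ⟨h1, h2⟩
      exact ⟨by rwa [← sub_eq_add_neg], by rwa [sub_neg_eq_add]⟩
    have hWopen : IsOpen W := by
      have hVopen : IsOpen V := hB.isOpen hVB
      have c1 : Continuous fun x : X => F q₀ + x := by fun_prop
      have c2 : Continuous fun x : X => F q₀ - x := by fun_prop
      exact (hVopen.preimage c1).inter (hVopen.preimage c2)
    have htop : AddSubgroup.closure W = ⊤ := by
      have hopen : IsOpen ((AddSubgroup.closure W : AddSubgroup X) : Set X) :=
        AddSubgroup.isOpen_of_mem_nhds _
          (Filter.mem_of_superset (hWopen.mem_nhds hW0) AddSubgroup.subset_closure)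
      have hclopen : IsClopen ((AddSubgroup.closure W : AddSubgroup X) : Set X) :=
        ⟨AddSubgroup.isClosed_of_isOpen _ hopen, hopen⟩
      have := hclopen.eq_univ ⟨0, AddSubgroup.zero_mem _⟩
      exact (AddSubgroup.coe_eq_univ).1 this
    have hrep : ∃ L : List X, (∀ w ∈ L, w ∈ W) ∧ L.sum = a - b := by
      have hmem : a - b ∈ AddSubgroup.closure W := by rw [htop]; trivial
      refine AddSubgroup.closure_induction
        (p := fun x _ => ∃ L : List X, (∀ w ∈ L, w ∈ W) ∧ L.sum = x) ?_ ?_ ?_ ?_ hmem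
      · intro x hx; exact ⟨[x], by simpa using hx, by simp⟩
      · exact ⟨[], by simp, by simp⟩
      · rintro x y _ _ ⟨L1, hL1, rfl⟩ ⟨L2, hL2, rfl⟩
        refine ⟨L1 ++ L2, ?_, by simp⟩
        intro w hw
        rcases List.mem_append.1 hw with h | h
        · exact hL1 w h
        · exact hL2 w h
      · rintro x _ ⟨L, hLW, rfl⟩
        refine ⟨L.map Neg.neg, ?_, ?_⟩
        · intro w hw
          obtain ⟨u, hu, rfl⟩ := List.mem_map.1 hw
          exact hWsymm u (hLW u hu)
        · have : ∀ M : List X, (M.map Neg.neg).sum = -M.sum := by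
            intro M
            induction M with
            | nil => simp
            | cons h t ih => simp only [List.map_cons, List.sum_cons, ih]; abel
          exact this L
    obtain ⟨L, hLW, hLsum⟩ := hrep
    have hclaim : ∀ q : ℚ, |q - q₀| * (L.length : ℚ) < 1 → F q ∈ V := by
      intro q hqlt
      have hd := hdiff q q₀
      rw [← hLsum] at hd
      set l : ℕ := q.den * q₀.den with hl
      set m : ℤ := q.num * q₀.den - q₀.num * q.den with hm
      have hlpos : 0 < l := Nat.mul_pos q.pos q₀.pos
      have hlq : (0 : ℚ) < (l : ℚ) := by exact_mod_cast hlpos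
      have hdq : (q.den : ℚ) ≠ 0 := by exact_mod_cast q.den_nz
      have hdq₀ : (q₀.den : ℚ) ≠ 0 := by exact_mod_cast q₀.den_nz
      have hq1 : (q.num : ℚ) = q * q.den := by
        have h := Rat.num_div_den q
        rwa [div_eq_iff hdq] at h
      have hq2 : (q₀.num : ℚ) = q₀ * q₀.den := by
        have h := Rat.num_div_den q₀
        rwa [div_eq_iff hdq₀] at h
      have hql : ((m : ℤ) : ℚ) = (q - q₀) * (l : ℚ) := by
        rw [hm, hl]; push_cast; rw [hq1, hq2]; ring
      have habs : |((m : ℤ) : ℚ)| = |q - q₀| * (l : ℚ) := by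
        rw [hql, abs_mul, abs_of_pos hlq]
      have hmlq : |((m : ℤ) : ℚ)| * (L.length : ℚ) < (l : ℚ) := by
        rw [habs]
        nlinarith [abs_nonneg (q - q₀)]
      have hmlz : |m| * (L.length : ℤ) < (l : ℤ) := by exact_mod_cast hmlq
      have hxW : F q - F q₀ ∈ W := by
        rcases lt_trichotomy m 0 with hneg | hzero | hpos
        · have hd' : (l : ℤ) • (-(F q - F q₀)) = (-m) • L.sum := by
            rw [smul_neg, hd, ← neg_smul]
          have hx' : l • (-(F q - F q₀)) = (-m).toNat • L.sum := by
            have h1 : ((-m).toNat : ℤ) = -m := Int.toNat_of_nonneg (by omega)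
            rw [← natCast_zsmul, ← natCast_zsmul, h1]
            exact hd'
          have hlt : (-m).toNat * L.length < l := by
            have h1 : ((-m).toNat : ℤ) * L.length < (l : ℤ) := by
              rw [Int.toNat_of_nonneg (by omega : (0:ℤ) ≤ -m)]
              rwa [abs_of_neg hneg] at hmlz
            exact_mod_cast h1
          have := mconvex_key hWconv hW0 L hLW (by omega : 0 < (-m).toNat) hlt hx'
          simpa using hWsymm _ this
        · rw [hzero, zero_smul] at hd
          have : F q - F q₀ = 0 := injz l hlpos _ _ (by rw [hd, smul_zero])
          rw [this]; exact hW0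
        · have hx' : l • (F q - F q₀) = m.toNat • L.sum := by
            have h1 : (m.toNat : ℤ) = m := Int.toNat_of_nonneg hpos.le
            rw [← natCast_zsmul, ← natCast_zsmul, h1]
            exact hd
          have hlt : m.toNat * L.length < l := by
            have h1 : (m.toNat : ℤ) * L.length < (l : ℤ) := by
              rw [Int.toNat_of_nonneg hpos.le]
              rwa [abs_of_pos hpos] at hmlz
            exact_mod_cast h1
          exact mconvex_key hWconv hW0 L hLW (by omega : 0 < m.toNat) hlt hx'
      have := hxW.1
      have heq : F q₀ + (F q - F q₀) = F q := by abel
      rwa [heq] at this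
    have hev : ∀ᶠ q : ℚ in nhds q₀, |q - q₀| * (L.length : ℚ) < 1 := by
      rw [Metric.eventually_nhds_iff]
      refine ⟨((1 / ((L.length : ℚ) + 1) : ℚ) : ℝ), by positivity, ?_⟩
      intro q hq
      have h0 : dist q q₀ = |(q : ℝ) - (q₀ : ℝ)| := Rat.dist_eq q q₀
      have h1 : ((|q - q₀| : ℚ) : ℝ) = |(q : ℝ) - (q₀ : ℝ)| := by push_cast; ring_nf
      have h2 : ((|q - q₀| : ℚ) : ℝ) < ((1 / ((L.length : ℚ) + 1) : ℚ) : ℝ) := by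
        rw [h1, ← h0]; exact hq
      have h3 : |q - q₀| < 1 / ((L.length : ℚ) + 1) := by exact_mod_cast h2
      have h4 : |q - q₀| * ((L.length : ℚ) + 1) < 1 :=
        (lt_div_iff₀ (by positivity : (0:ℚ) < (L.length : ℚ) + 1)).1 h3
      nlinarith [abs_nonneg (q - q₀)]
    exact hev.mono (fun q hq => hclaim q hq)
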